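/- A matroid A on K(V), |V| ≥ m+1, with circuit family C is an m-dimensional abstract rigidity matroid if and only if (Z1) no circuit contains a vertex of valence less than m+1, and (Z2) every K(U) with |U| = m+2 is a circuit. -/

import Mathlib

open Matroid Set

/-- A circuit of a matroid: a minimal dependent set. -/
def Matroid.IsCircuit' {α : Type*} (M : Matroid α) (C : Set α) : Prop :=
  M.Dep C ∧ ∀ D, D ⊂ C → M.Indep D

/-- A cocircuit: a circuit of the dual matroid. -/
def Matroid.IsCocircuit' {α : Type*} (M : Matroid α) (C : Set α) : Prop :=
  M✶.IsCircuit' C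

/-- A hyperplane: a maximal subset of the ground set not containing a basis. -/
def Matroid.IsHyperplane {α : Type*} (M : Matroid α) (H : Set α) : Prop :=
  H ⊆ M.E ∧ (¬ ∃ B ⊆ H, M.IsBase B) ∧
    ∀ H', H ⊂ H' → H' ⊆ M.E → ∃ B ⊆ H', M.IsBase B

/-- The rank of a set: the size of a largest independent subset. -/
noncomputable def Matroid.rk {α : Type*} (M : Matroid α) (X : Set α) : ℕ :=
  sSup {n | ∃ I ⊆ X, M.Indep I ∧ I.ncard = n}

/-- `cK U` is the edge set of the complete graph on the vertex set `U`. -/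
def cK {V : Type*} (U : Set V) : Set (Sym2 V) :=
  {e | ¬ e.IsDiag ∧ ∀ v ∈ e, v ∈ U}

/-- The support (set of endpoints) of an edge set. -/
def supp {V : Type*} (E : Set (Sym2 V)) : Set V := {v | ∃ e ∈ E, v ∈ e}

/-- An edge set is rigid if its closure is the complete graph on its support. -/
def Rigid {V : Type*} (A : Matroid (Sym2 V)) (E : Set (Sym2 V)) : Prop :=
  A.closure E = cK (supp E)

/-- `A` is an `m`-dimensional abstract rigidity matroid on `K(W)`. -/
def IsARMOn {V : Type*} (m : ℕ) (W : Set V) (A : Matroid (Sym2 V)) : Prop :=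
  A.E = cK W ∧
  (∀ E F : Set (Sym2 V), E ⊆ cK W → F ⊆ cK W →
    (supp E ∩ supp F).ncard < m →
    A.closure (E ∪ F) ⊆ cK (supp E) ∪ cK (supp F)) ∧
  (∀ E F : Set (Sym2 V), E ⊆ cK W → F ⊆ cK W →
    Rigid A E → Rigid A F → m ≤ (supp E ∩ supp F).ncard →
    Rigid A (E ∪ F))

/-- The star of a vertex: all edges containing it. -/
def starv {V : Type*} (v : V) : Set (Sym2 V) := {e | ¬ e.IsDiag ∧ v ∈ e}

/-- `C` is a vertex star minus `m-1` edges. -/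
def IsStarMinus {V : Type*} (m : ℕ) (C : Set (Sym2 V)) : Prop :=
  ∃ v : V, ∃ D ⊆ starv v, D.ncard = m - 1 ∧ C = starv v \ D

/-- The valence (degree) of a vertex in an edge set. -/
noncomputable def valence {V : Type*} (C : Set (Sym2 V)) (v : V) : ℕ :=
  {e ∈ C | v ∈ e}.ncard

/-- `bigstar V' = K(V) \ K(V \ V')`. -/
def bigstar {V : Type*} (V' : Set V) : Set (Sym2 V) :=
  cK (univ : Set V) \ cK (V'ᶜ)

/-- The family `H_m(V)` of unions of two complete graphs covering `V` and
meeting in `m-1` vertices. -/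
def HmFam (m : ℕ) (V : Type*) : Set (Set (Sym2 V)) :=
  {H | ∃ V₁ V₂ : Set V, V₁ ∪ V₂ = univ ∧ (V₁ ∩ V₂).ncard = m - 1 ∧
    ¬ V₁ ⊆ V₂ ∧ ¬ V₂ ⊆ V₁ ∧ H = cK V₁ ∪ cK V₂}

/-- The family `H_m^{(1)}(K(X))` of sets `Δ_v^A` relative to a vertex set `X`. -/
def Hm1Fam {V : Type*} (m : ℕ) (X : Set V) : Set (Set (Sym2 V)) :=
  {H | ∃ v ∈ X, ∃ A ⊆ X \ {v}, A.ncard = m - 1 ∧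
    H = cK ({v} ∪ A) ∪ cK (X \ {v})}

section PartA
variable {V : Type*} {S T : Set V} {E F C : Set (Sym2 V)} {e f : Sym2 V} {u v w x y : V}

lemma mem_cK : e ∈ cK S ↔ ¬ e.IsDiag ∧ ∀ v ∈ e, v ∈ S := Iff.rfl

lemma pair_mem_cK : s(x, y) ∈ cK S ↔ x ≠ y ∧ x ∈ S ∧ y ∈ S := by
  simp [cK, Sym2.forall_mem_pair, and_assoc]

lemma cK_mono (h : S ⊆ T) : cK S ⊆ cK T := fun e he => ⟨he.1, fun v hv => h (he.2 v hv)⟩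

lemma cK_empty : cK (∅ : Set V) = ∅ := by
  ext e
  induction e with
  | _ x y => simp [pair_mem_cK]

lemma mem_supp : v ∈ supp E ↔ ∃ e ∈ E, v ∈ e := Iff.rfl

lemma supp_mono (h : E ⊆ F) : supp E ⊆ supp F := fun v ⟨e, he, hv⟩ => ⟨e, h he, hv⟩

lemma supp_union : supp (E ∪ F) = supp E ∪ supp F := by
  ext v; constructor
  · rintro ⟨e, he | he, hv⟩
    · exact Or.inl ⟨e, he, hv⟩
    · exact Or.inr ⟨e, he, hv⟩
  · rintro (⟨e, he, hv⟩ | ⟨e, he, hv⟩)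
    exacts [⟨e, Or.inl he, hv⟩, ⟨e, Or.inr he, hv⟩]

lemma supp_empty : supp (∅ : Set (Sym2 V)) = ∅ := by
  ext v; simp [supp]

lemma supp_cK_subset : supp (cK S) ⊆ S := by
  rintro v ⟨e, he, hv⟩; exact he.2 v hv

lemma supp_subset_of_subset_cK (h : E ⊆ cK S) : supp E ⊆ S :=
  (supp_mono h).trans supp_cK_subset

lemma subset_cK_supp (h : E ⊆ cK Set.univ) : E ⊆ cK (supp E) :=
  fun e he => ⟨(h he).1, fun v hv => ⟨e, he, hv⟩⟩

lemma mem_of_mem_of_mem_cK (h : e ∈ cK S) (hv : v ∈ e) : v ∈ S := h.2 v hv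

lemma not_isDiag_of_mem_cK (h : e ∈ cK S) : ¬ e.IsDiag := h.1

lemma supp_cK (h : 1 < S.ncard) : supp (cK S) = S := by
  refine supp_cK_subset.antisymm fun v hv => ?_
  obtain ⟨w, hw, hwv⟩ := Set.exists_ne_of_one_lt_ncard h v
  exact ⟨s(v, w), pair_mem_cK.2 ⟨Ne.symm hwv, hv, hw⟩, Sym2.mem_mk_left v w⟩

lemma pair_eq_of_mem_of_mem (hne : x ≠ y) (hx : x ∈ e) (hy : y ∈ e) : e = s(x, y) :=
  (Sym2.mem_and_mem_iff hne).1 ⟨hx, hy⟩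

lemma exists_pair_of_not_isDiag {e : Sym2 V} (hf : ¬ e.IsDiag) :
    ∃ p q, p ≠ q ∧ e = s(p, q) := by
  have h : ∃ p q, e = s(p, q) := by
    induction e with
    | _ p q => exact ⟨p, q, rfl⟩
  obtain ⟨p, q, rfl⟩ := h
  exact ⟨p, q, fun hh => hf (Sym2.mk_isDiag_iff.2 hh), rfl⟩

/-- Classification helper: an edge of `cK (insert a S)` not containing `a`. -/
lemma mem_cK_of_not_mem (h : e ∈ cK (insert a S)) (ha : a ∉ e) : e ∈ cK S := by
  refine ⟨h.1, fun v hv => ?_⟩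
  rcases h.2 v hv with rfl | hvS
  · exact absurd hv ha
  · exact hvS

/-- Classification helper: an edge of `cK S` containing `a`. -/
lemma eq_pair_of_mem_cK (h : e ∈ cK S) (ha : a ∈ e) :
    ∃ w ∈ S, w ≠ a ∧ e = s(a, w) := by
  obtain ⟨w, rfl⟩ := Sym2.mem_iff_exists.1 ha
  refine ⟨w, h.2 w (Sym2.mem_mk_right a w), fun hwa => h.1 ?_, rfl⟩
  rw [hwa]; exact Sym2.diag_isDiag a

end PartA

section PartB
variable {V : Type*} [DecidableEq V] {S T : Set V} {E F C B : Set (Sym2 V)}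
  {e f : Sym2 V} {a u v w x y : V}

lemma pair_left_injOn (ha : a ∉ S) : Set.InjOn (fun x => s(a, x)) S := by
  intro x hx y hy h
  rcases Sym2.eq_iff.1 h with ⟨-, h2⟩ | ⟨h1, h2⟩
  · exact h2
  · exact absurd h1.symm (fun hh => ha (hh ▸ hy))

lemma cK_insert (ha : a ∉ S) :
    cK (insert a S) = cK S ∪ (fun x => s(a, x)) '' S := by
  ext e
  constructor
  · intro he
    by_cases hae : a ∈ e
    · obtain ⟨w, hw, hwa, rfl⟩ := eq_pair_of_mem_cK he hae
      rcases hw with rfl | hwS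
      · exact absurd rfl hwa
      · exact Or.inr ⟨w, hwS, rfl⟩
    · exact Or.inl (mem_cK_of_not_mem he hae)
  · rintro (he | ⟨x, hx, rfl⟩)
    · exact cK_mono (subset_insert a S) he
    · exact pair_mem_cK.2 ⟨fun h => ha (h ▸ hx), mem_insert a S, subset_insert a S hx⟩

lemma cK_finite (hS : S.Finite) : (cK S).Finite := by
  refine ((hS.prod hS).image (fun p : V × V => Sym2.mk p.1 p.2)).subset (t := cK S) ?_
  intro e he
  induction e with
  | _ x y => exact ⟨(x, y), Set.mk_mem_prod (he.2 x (Sym2.mem_mk_left x y))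
      (he.2 y (Sym2.mem_mk_right x y)), rfl⟩

lemma cK_coe_ncard (s : Finset V) : (cK (↑s : Set V)).ncard = s.card.choose 2 := by
  induction s using Finset.induction_on with
  | empty => simp [cK_empty]
  | @insert a s haS ih =>
    have haS' : a ∉ (↑s : Set V) := by exact_mod_cast haS
    have himg : ((fun x => s(a, x)) '' (↑s : Set V)).ncard = (↑s : Set V).ncard :=
      Set.ncard_image_of_injOn (pair_left_injOn haS')
    have hdisj : Disjoint (cK (↑s : Set V)) ((fun x => s(a, x)) '' ↑s) := by
      rw [Set.disjoint_right]
      rintro e ⟨x, hx, rfl⟩ he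
      exact haS' (he.2 a (Sym2.mem_mk_left a x))
    rw [Finset.coe_insert, cK_insert haS', Set.ncard_union_eq hdisj
      (cK_finite s.finite_toSet) (s.finite_toSet.image _), himg, ih, Set.ncard_coe_finset,
      Finset.card_insert_of_notMem haS, Nat.choose_succ_succ, Nat.choose_one_right,
      Nat.add_comm]

lemma cK_ncard (hS : S.Finite) : (cK S).ncard = S.ncard.choose 2 := by
  have h := cK_coe_ncard hS.toFinset
  rwa [hS.coe_toFinset, ← Set.ncard_coe_finset, hS.coe_toFinset] at h

end PartB
section PartB2
variable {V : Type*} [Fintype V] [DecidableEq V] {S T : Set V} {E F C B : Set (Sym2 V)}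
  {e f : Sym2 V} {a u v w x y : V}

/-- The neighbours of `v` in the edge set `C`. -/
def nbrs (C : Set (Sym2 V)) (v : V) : Set V := {w | w ≠ v ∧ s(v, w) ∈ C}

lemma nbrs_mem : w ∈ nbrs C v ↔ w ≠ v ∧ s(v, w) ∈ C := Iff.rfl

lemma edgesAt_eq_image (hC : C ⊆ cK Set.univ) :
    {e ∈ C | v ∈ e} = (fun w => s(v, w)) '' nbrs C v := by
  ext e
  constructor
  · rintro ⟨heC, hve⟩
    obtain ⟨w, -, hwv, rfl⟩ := eq_pair_of_mem_cK (hC heC) hve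
    exact ⟨w, ⟨hwv, heC⟩, rfl⟩
  · rintro ⟨w, ⟨hwv, hwC⟩, rfl⟩
    exact ⟨hwC, Sym2.mem_mk_left v w⟩

lemma valence_eq_ncard_nbrs (hC : C ⊆ cK Set.univ) : valence C v = (nbrs C v).ncard := by
  rw [valence, edgesAt_eq_image hC]
  exact Set.ncard_image_of_injOn (fun x hx y hy hxy => by
    rcases Sym2.eq_iff.1 hxy with ⟨-, h⟩ | ⟨h1, h2⟩
    · exact h
    · exact absurd h1.symm hy.1)

lemma nbrs_subset_supp : nbrs C v ⊆ supp C :=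
  fun w hw => ⟨s(v, w), hw.2, Sym2.mem_mk_right v w⟩

lemma mem_supp_left_of_nbrs (h : w ∈ nbrs C v) : v ∈ supp C :=
  ⟨s(v, w), h.2, Sym2.mem_mk_left v w⟩

lemma nbrs_mono (h : C ⊆ E) : nbrs C v ⊆ nbrs E v := fun w hw => ⟨hw.1, h hw.2⟩

lemma supp_ncard_lower (hv : v ∈ supp C) :
    (nbrs C v).ncard + 1 ≤ (supp C).ncard := by
  have hsub : insert v (nbrs C v) ⊆ supp C := by
    rw [Set.insert_subset_iff]
    exact ⟨hv, nbrs_subset_supp⟩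
  calc (nbrs C v).ncard + 1 = (insert v (nbrs C v)).ncard := by
        rw [Set.ncard_insert_of_notMem (fun h => (nbrs_mem.1 h).1 rfl)]
      _ ≤ (supp C).ncard := Set.ncard_le_ncard hsub (Set.toFinite _)

end PartB2
section PartC
variable {α : Type*} {M : Matroid α} {X I J C D : Set α} {e : α}

lemma Matroid.IsCircuit'.dep (h : M.IsCircuit' C) : M.Dep C := h.1

lemma Matroid.IsCircuit'.subset_ground (h : M.IsCircuit' C) : C ⊆ M.E := h.1.subset_ground

lemma exists_isCircuit'_subset_aux (n : ℕ) :
    ∀ X : Set α, X.Finite → X.ncard ≤ n → M.Dep X → ∃ C ⊆ X, M.IsCircuit' C := by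
  induction n with
  | zero =>
    intro X hXfin hX hdep
    rw [Nat.le_zero, Set.ncard_eq_zero hXfin] at hX
    exact absurd (hX ▸ M.empty_indep) hdep.not_indep
  | succ n ih =>
    intro X hXfin hX hdep
    by_cases h : ∀ D, D ⊂ X → M.Indep D
    · exact ⟨X, Set.Subset.rfl, hdep, h⟩
    · push_neg at h
      obtain ⟨D, hDX, hDind⟩ := h
      have hDdep : M.Dep D := ⟨hDind, hDX.subset.trans hdep.subset_ground⟩
      obtain ⟨C, hCD, hC⟩ := ih D (hXfin.subset hDX.subset)
        (by
          have := Set.ncard_lt_ncard hDX hXfin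
          omega) hDdep
      exact ⟨C, hCD.trans hDX.subset, hC⟩

lemma Matroid.Dep.exists_isCircuit'_subset (hdep : M.Dep X) (hXfin : X.Finite) :
    ∃ C ⊆ X, M.IsCircuit' C := by
  exact exists_isCircuit'_subset_aux X.ncard X hXfin le_rfl hdep

lemma Matroid.IsCircuit'.diff_singleton_indep (hC : M.IsCircuit' C) (he : e ∈ C) :
    M.Indep (C \ {e}) :=
  hC.2 _ (Set.sdiff_singleton_ssubset.2 he)

lemma Matroid.IsCircuit'.mem_closure_diff_singleton (hC : M.IsCircuit' C) (he : e ∈ C) :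
    e ∈ M.closure (C \ {e}) := by
  rw [(hC.diff_singleton_indep he).mem_closure_iff]
  left
  rw [Set.insert_diff_singleton, Set.insert_eq_of_mem he]
  exact hC.1

lemma Matroid.IsCircuit'.nonempty (hC : M.IsCircuit' C) : C.Nonempty := by
  rw [Set.nonempty_iff_ne_empty]
  rintro rfl
  exact hC.1.not_indep M.empty_indep

/-- Fundamental-circuit style lemma. -/
lemma exists_isCircuit_of_mem_closure (hX : X ⊆ M.E) (hXfin : X.Finite)
    (he : e ∈ M.closure X) (heX : e ∉ X) :
    ∃ C, M.IsCircuit' C ∧ e ∈ C ∧ C ⊆ insert e X := by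
  obtain ⟨I, hI⟩ := M.exists_isBasis X hX
  have heI : e ∈ M.closure I := by rwa [hI.closure_eq_closure]
  have heI' : e ∉ I := fun h => heX (hI.subset h)
  have hdep : M.Dep (insert e I) := by
    rw [hI.indep.mem_closure_iff] at heI
    exact heI.resolve_right heI'
  obtain ⟨C, hCsub, hC⟩ := hdep.exists_isCircuit'_subset
    ((hXfin.subset hI.subset).insert e)
  refine ⟨C, hC, ?_, hCsub.trans (Set.insert_subset_insert hI.subset)⟩
  by_contra heC
  exact hC.1.not_indep (hI.indep.subset (fun x hx =>
    ((hCsub hx).resolve_left (fun h => heC (h ▸ hx)))))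

/-- Cardinality comparison for independent sets in a common span. -/
lemma Matroid.Indep.encard_le_of_subset_closure (hI : M.Indep I) (hJ : M.Indep J)
    (h : I ⊆ M.closure J) : I.encard ≤ J.encard := by
  obtain ⟨I', hI', hII'⟩ := hI.subset_isBasis_of_subset h (M.closure_subset_ground J)
  rw [← hI'.encard_eq_encard hJ.isBasis_closure]
  exact Set.encard_mono hII'

lemma Matroid.Indep.ncard_le_of_subset_closure (hI : M.Indep I) (hJ : M.Indep J) (hJfin : J.Finite)
    (h : I ⊆ M.closure J) : I.ncard ≤ J.ncard := by
  have := hI.encard_le_of_subset_closure hJ h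
  rw [Set.ncard_def, Set.ncard_def]
  exact ENat.toNat_le_toNat this (by rwa [Set.encard_ne_top_iff])

/-- Cardinality comparison with a (not necessarily independent) spanning set. -/
lemma Matroid.Indep.ncard_le_of_subset_closure' (hI : M.Indep I) (hB : B ⊆ M.E) (hBfin : B.Finite)
    (h : I ⊆ M.closure B) : I.ncard ≤ B.ncard := by
  obtain ⟨J, hJ⟩ := M.exists_isBasis B hB
  have : I ⊆ M.closure J := by rwa [hJ.closure_eq_closure]
  exact (hI.ncard_le_of_subset_closure hJ.indep (hBfin.subset hJ.subset) this).trans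
    (Set.ncard_le_ncard hJ.subset hBfin)

end PartC
section PartD
open Set

variable {V : Type*} [Fintype V] [DecidableEq V] {m : ℕ} {A : Matroid (Sym2 V)}
  {S T : Set V} {E F C B J : Set (Sym2 V)} {e f g : Sym2 V} {a t u v w x y : V}

/-- Condition Z1. -/
def Zone (m : ℕ) (A : Matroid (Sym2 V)) : Prop :=
  ∀ C, A.IsCircuit' C → ∀ v ∈ supp C, m + 1 ≤ valence C v

/-- Condition Z2. -/
def Ztwo (m : ℕ) (A : Matroid (Sym2 V)) : Prop :=
  ∀ U : Set V, U.ncard = m + 2 → A.IsCircuit' (cK U)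

lemma two_mul_choose_two (n : ℕ) : 2 * n.choose 2 = n * (n - 1) := by
  induction n with
  | zero => simp
  | succ k ih =>
    rw [Nat.choose_succ_succ, Nat.choose_one_right, Nat.mul_add, ih, Nat.succ_sub_one]
    cases k with
    | zero => simp
    | succ j =>
      rw [Nat.succ_sub_one]
      ring

lemma cK_subset_ground (hE : A.E = cK (univ : Set V)) (S : Set V) : cK S ⊆ A.E := by
  rw [hE]; exact cK_mono (subset_univ S)

lemma Zone.nbrs_ncard (hZ1 : Zone m A) (hE : A.E = cK (univ : Set V))
    (hC : A.IsCircuit' C) (hv : v ∈ supp C) : m + 1 ≤ (nbrs C v).ncard := by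
  have hsub : C ⊆ cK (univ : Set V) := hE ▸ hC.subset_ground
  rw [← valence_eq_ncard_nbrs hsub]
  exact hZ1 C hC v hv

/-- In a circuit, every endpoint of an edge lies on a second edge. -/
lemma Zone.exists_second_edge (hZ1 : Zone m A) (hm : 0 < m) (hE : A.E = cK (univ : Set V))
    (hC : A.IsCircuit' C) (he : e ∈ C) (hu : u ∈ e) :
    ∃ f ∈ C, f ≠ e ∧ u ∈ f := by
  have hv : u ∈ supp C := ⟨e, he, hu⟩
  have h2 : 1 < (nbrs C u).ncard := lt_of_lt_of_le (by omega) (hZ1.nbrs_ncard hE hC hv)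
  obtain ⟨w₁, hw₁⟩ := (Set.nonempty_of_ncard_ne_zero (by omega) : (nbrs C u).Nonempty)
  obtain ⟨w₂, hw₂, hne⟩ := Set.exists_ne_of_one_lt_ncard h2 w₁
  by_cases h : s(u, w₁) = e
  · exact ⟨s(u, w₂), hw₂.2, fun hh => hne (by
      rw [← h] at hh
      rcases Sym2.eq_iff.1 hh with ⟨-, h2'⟩ | ⟨h1', h2'⟩
      · exact absurd h2' hne
      · exact absurd h2' hw₂.1), Sym2.mem_mk_left u w₂⟩
  · exact ⟨s(u, w₁), hw₁.2, h, Sym2.mem_mk_left u w₁⟩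

/-- `cK S` is a flat. -/
lemma Zone.closure_cK (hZ1 : Zone m A) (hm : 0 < m) (hE : A.E = cK (univ : Set V))
    (S : Set V) : A.closure (cK S) = cK S := by
  refine subset_antisymm ?_ (A.subset_closure _ (cK_subset_ground hE S))
  intro e he
  by_contra heS
  have heE : e ∈ A.E := A.closure_subset_ground _ he
  obtain ⟨C, hC, heC, hCsub⟩ := exists_isCircuit_of_mem_closure (cK_subset_ground hE S)
    (Set.toFinite _) he heS
  refine heS ⟨(hE ▸ heE : e ∈ cK (univ : Set V)).1, fun u hu => ?_⟩
  obtain ⟨f, hfC, hfe, huf⟩ := hZ1.exists_second_edge hm hE hC heC hu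
  have : f ∈ cK S := ((hCsub hfC).resolve_left hfe)
  exact this.2 u huf

/-- Complete graphs on at most `m+1` vertices are independent. -/
lemma Zone.indep_cK_small (hZ1 : Zone m A) (hE : A.E = cK (univ : Set V))
    (hS : S.ncard ≤ m + 1) : A.Indep (cK S) := by
  by_contra hind
  have hdep : A.Dep (cK S) := (Matroid.dep_iff (M := A)).mpr ⟨hind, cK_subset_ground hE S⟩
  obtain ⟨C, hCsub, hC⟩ := hdep.exists_isCircuit'_subset (Set.toFinite _)
  obtain ⟨e, heC⟩ := hC.nonempty
  have hu : e.out.1 ∈ supp C := ⟨e, heC, Sym2.out_fst_mem e⟩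
  have h1 : m + 1 ≤ (nbrs C e.out.1).ncard := hZ1.nbrs_ncard hE hC hu
  have h2 := supp_ncard_lower hu
  have h3 : (supp C).ncard ≤ S.ncard :=
    Set.ncard_le_ncard (supp_subset_of_subset_cK hCsub) (Set.toFinite _)
  omega

/-- Coning an independent set with at most `m` new edges stays independent. -/
lemma Zone.indep_cone (hZ1 : Zone m A) (hE : A.E = cK (univ : Set V))
    (hB : A.Indep B) (hBsupp : a ∉ supp B) (hT : T.ncard ≤ m) (haT : a ∉ T) :
    A.Indep (B ∪ (fun x => s(a, x)) '' T) := by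
  by_contra hind
  have hsub : B ∪ (fun x => s(a, x)) '' T ⊆ A.E := by
    refine Set.union_subset hB.subset_ground ?_
    rintro e ⟨x, hx, rfl⟩
    rw [hE]
    exact pair_mem_cK.2 ⟨fun h => haT (h ▸ hx), trivial, trivial⟩
  obtain ⟨C, hCsub, hC⟩ := ((Matroid.dep_iff (M := A)).mpr ⟨hind, hsub⟩).exists_isCircuit'_subset (Set.toFinite _)
  by_cases ha : a ∈ supp C
  · have hnb : nbrs C a ⊆ T := by
      rintro w ⟨hwa, hwC⟩
      rcases hCsub hwC with hB' | ⟨x, hx, hxe⟩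
      · exact absurd ⟨_, hB', Sym2.mem_mk_left a w⟩ hBsupp
      · rcases Sym2.eq_iff.1 hxe.symm with ⟨-, h2⟩ | ⟨h1, h2⟩
        · exact h2 ▸ hx
        · exact absurd h2 hwa
    have := hZ1.nbrs_ncard hE hC ha
    have := Set.ncard_le_ncard hnb (Set.toFinite _)
    omega
  · refine hC.dep.not_indep (hB.subset fun f hf => ?_)
    rcases hCsub hf with h | ⟨x, hx, rfl⟩
    · exact h
    · exact absurd ⟨_, hf, Sym2.mem_mk_left a x⟩ ha

end PartD
section PartD2
open Set

variable {V : Type*} [Fintype V] [DecidableEq V] {m : ℕ} {A : Matroid (Sym2 V)}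
  {S T : Set V} {E F C B J : Set (Sym2 V)} {e f g : Sym2 V} {a t u v w x y : V}

lemma image_pair_subset_cK (ha : a ∈ S) (hT : T ⊆ S) (haT : a ∉ T) :
    (fun x => s(a, x)) '' T ⊆ cK S := by
  rintro e ⟨x, hx, rfl⟩
  exact pair_mem_cK.2 ⟨fun h => haT (h ▸ hx), ha, hT hx⟩

lemma disjoint_image_pair (h : a ∉ supp E) : Disjoint E ((fun x => s(a, x)) '' T) := by
  rw [Set.disjoint_right]
  rintro e ⟨x, hx, rfl⟩ he
  exact h ⟨_, he, Sym2.mem_mk_left a x⟩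

lemma insert_diff_self_of_mem (ha : a ∈ S) : insert a (S \ {a}) = S := by
  rw [Set.insert_diff_singleton, Set.insert_eq_of_mem ha]

/-- There is a large independent set in `cK S`. -/
lemma Zone.exists_big_indep (hZ1 : Zone m A) (hE : A.E = cK (univ : Set V)) :
    ∀ n, m + 1 ≤ n → ∀ S : Set V, S.ncard = n →
      ∃ J ⊆ cK S, A.Indep J ∧ 2 * J.ncard + m * (m + 1) = 2 * (m * n) := by
  intro n hn
  induction n, hn using Nat.le_induction with
  | base =>
    intro S hS
    refine ⟨cK S, Set.Subset.rfl, hZ1.indep_cK_small hE hS.le, ?_⟩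
    rw [cK_ncard (Set.toFinite S), hS, two_mul_choose_two, Nat.succ_sub_one]
    ring
  | succ n hn ih =>
    intro S hS
    obtain ⟨a, ha⟩ : S.Nonempty := Set.nonempty_of_ncard_ne_zero (by omega)
    have hS' : (S \ {a}).ncard = n := by
      rw [Set.ncard_diff_singleton_of_mem ha, hS]
      omega
    obtain ⟨J', hJ'sub, hJ'ind, hJ'card⟩ := ih (S \ {a}) hS'
    obtain ⟨T, hTsub, hTcard⟩ := Set.exists_subset_card_eq
      (show m ≤ (S \ {a}).ncard by omega)
    have haT : a ∉ T := fun h => (hTsub h).2 rfl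
    have hasupp : a ∉ supp J' := fun h => (supp_subset_of_subset_cK hJ'sub h).2 rfl
    refine ⟨J' ∪ (fun x => s(a, x)) '' T, ?_, ?_, ?_⟩
    · exact Set.union_subset (hJ'sub.trans (cK_mono Set.diff_subset))
        (image_pair_subset_cK ha (hTsub.trans Set.diff_subset) haT)
    · exact hZ1.indep_cone hE hJ'ind hasupp hTcard.le haT
    · rw [Set.ncard_union_eq (disjoint_image_pair hasupp) (Set.toFinite _) (Set.toFinite _),
        Set.ncard_image_of_injOn (pair_left_injOn haT), hTcard]
      have : 2 * (m * (n + 1)) = 2 * (m * n) + 2 * m := by ring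
      omega

/-- There is a small spanning set for `cK S`. -/
lemma Zone.exists_spanning (hZ1 : Zone m A) (hZ2 : Ztwo m A) (hE : A.E = cK (univ : Set V)) :
    ∀ n, m + 1 ≤ n → ∀ S : Set V, S.ncard = n →
      ∃ B ⊆ cK S, 2 * B.ncard + m * (m + 1) = 2 * (m * n) ∧ cK S ⊆ A.closure B := by
  intro n hn
  induction n, hn using Nat.le_induction with
  | base =>
    intro S hS
    refine ⟨cK S, Set.Subset.rfl, ?_, A.subset_closure _ (cK_subset_ground hE S)⟩
    rw [cK_ncard (Set.toFinite S), hS, two_mul_choose_two, Nat.succ_sub_one]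
    ring
  | succ n hn ih =>
    intro S hS
    obtain ⟨a, ha⟩ : S.Nonempty := Set.nonempty_of_ncard_ne_zero (by omega)
    have hS' : (S \ {a}).ncard = n := by
      rw [Set.ncard_diff_singleton_of_mem ha, hS]
      omega
    obtain ⟨B', hB'sub, hB'card, hB'span⟩ := ih (S \ {a}) hS'
    obtain ⟨T, hTsub, hTcard⟩ := Set.exists_subset_card_eq
      (show m ≤ (S \ {a}).ncard by omega)
    have haT : a ∉ T := fun h => (hTsub h).2 rfl
    have hasupp : a ∉ supp B' := fun h => (supp_subset_of_subset_cK hB'sub h).2 rfl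
    set B := B' ∪ (fun x => s(a, x)) '' T with hBdef
    have hBsub : B ⊆ cK S := Set.union_subset (hB'sub.trans (cK_mono Set.diff_subset))
      (image_pair_subset_cK ha (hTsub.trans Set.diff_subset) haT)
    have hB'cl : A.closure B' ⊆ A.closure B := A.closure_subset_closure Set.subset_union_left
    refine ⟨B, hBsub, ?_, ?_⟩
    · rw [hBdef, Set.ncard_union_eq (disjoint_image_pair hasupp) (Set.toFinite _)
        (Set.toFinite _), Set.ncard_image_of_injOn (pair_left_injOn haT), hTcard]
      have : 2 * (m * (n + 1)) = 2 * (m * n) + 2 * m := by ring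
      omega
    · intro e he
      by_cases hae : a ∈ e
      · obtain ⟨w, hwS, hwa, rfl⟩ := eq_pair_of_mem_cK he hae
        have hwS' : w ∈ S \ {a} := ⟨hwS, hwa⟩
        by_cases hwT : w ∈ T
        · exact A.subset_closure _ (hBsub.trans (cK_subset_ground hE S))
            (Or.inr ⟨w, hwT, rfl⟩)
        · -- use the circuit on {a, w} ∪ T
          set U : Set V := insert a (insert w T) with hUdef
          have haU : a ∉ insert w T := by
            rintro (rfl | h)
            · exact hwa rfl
            · exact haT h
          have hUcard : U.ncard = m + 2 := by
            rw [hUdef, Set.ncard_insert_of_notMem haU (Set.toFinite _),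
              Set.ncard_insert_of_notMem hwT (Set.toFinite _), hTcard]
          have hCirc := hZ2 U hUcard
          have heU : s(a, w) ∈ cK U := pair_mem_cK.2
            ⟨fun h => hwa h.symm, Set.mem_insert _ _,
              Set.mem_insert_iff.2 (Or.inr (Set.mem_insert _ _))⟩
          have hsub2 : cK U \ {s(a, w)} ⊆ A.closure B := by
            rintro g ⟨hgU, hge⟩
            by_cases hag : a ∈ g
            · obtain ⟨z, hzU, hza, rfl⟩ := eq_pair_of_mem_cK hgU hag
              rcases hzU with rfl | hz'
              · exact absurd rfl hza
              · rcases hz' with rfl | hzT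
                · exact absurd rfl hge
                · exact A.subset_closure _ (hBsub.trans (cK_subset_ground hE S))
                    (Or.inr ⟨z, hzT, rfl⟩)
            · have : g ∈ cK (insert w T) := mem_cK_of_not_mem (hUdef ▸ hgU) hag
              have : g ∈ cK (S \ {a}) := cK_mono (Set.insert_subset hwS' hTsub) this
              exact hB'cl (hB'span this)
          have hstep := A.closure_subset_closure hsub2
          rw [A.closure_closure B] at hstep
          exact hstep (hCirc.mem_closure_diff_singleton heU)
      · have : e ∈ cK (S \ {a}) := by
          refine mem_cK_of_not_mem ?_ hae
          rwa [_root_.insert_diff_self_of_mem ha]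
        exact hB'cl (hB'span this)

/-- Upper bound on independent subsets of `cK S`. -/
lemma Zone.indep_ncard_upper (hZ1 : Zone m A) (hZ2 : Ztwo m A)
    (hE : A.E = cK (univ : Set V)) (hS : m + 1 ≤ S.ncard) (hJ : A.Indep J)
    (hJS : J ⊆ cK S) : 2 * J.ncard + m * (m + 1) ≤ 2 * (m * S.ncard) := by
  obtain ⟨B, hBsub, hBcard, hBspan⟩ := hZ1.exists_spanning hZ2 hE S.ncard hS S rfl
  have hJcl : J ⊆ A.closure B := hJS.trans hBspan
  have := hJ.ncard_le_of_subset_closure' (hBsub.trans (cK_subset_ground hE S))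
    (Set.toFinite _) hJcl
  omega

end PartD2
section PartE
open Set

variable {V : Type*} [Fintype V] [DecidableEq V] {m : ℕ} {A : Matroid (Sym2 V)}
  {V₁ V₂ S T : Set V} {E F C B J G : Set (Sym2 V)} {e f g h : Sym2 V} {a t u v w x y : V}

lemma final_arith (hm : 0 < m) (h : (m - 1) * (m - 2) + m * (m + 1) ≤ 2 * (m * (m - 1))) :
    False := by
  rcases m with - | k
  · omega
  · rcases k with - | j
    · simp at h
    · have h1 : j + 1 + 1 - 1 = j + 1 := rfl
      have h2 : j + 1 + 1 - 2 = j := rfl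
      rw [h1, h2] at h
      have hkey : (j + 1) * j + (j + 2) * (j + 2 + 1) = 2 * ((j + 2) * (j + 1)) + 2 := by ring
      linarith [h, hkey]

/-- If one side is small, no crossing edge is in the closure. -/
lemma Zone.small_side (hZ1 : Zone m A) (hm : 0 < m) (hE : A.E = cK (univ : Set V))
    (hn : V₁.ncard ≤ m) (hu1 : u ∈ V₁) (hu2 : u ∉ V₂) (hv1 : v ∉ V₁)
    (he : s(u, v) ∈ A.closure (cK V₁ ∪ cK V₂)) : False := by
  have hGsub : cK V₁ ∪ cK V₂ ⊆ A.E :=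
    Set.union_subset (cK_subset_ground hE V₁) (cK_subset_ground hE V₂)
  have heG : s(u, v) ∉ cK V₁ ∪ cK V₂ := by
    rintro (h | h)
    · exact hv1 (pair_mem_cK.1 h).2.2
    · exact hu2 (pair_mem_cK.1 h).2.1
  obtain ⟨C, hC, heC, hCsub⟩ := exists_isCircuit_of_mem_closure hGsub (Set.toFinite _) he heG
  have hnb : nbrs C u ⊆ insert v (V₁ \ {u}) := by
    rintro w ⟨hwu, hwC⟩
    rcases hCsub hwC with hh | (hh | hh)
    · left
      have := Sym2.eq_iff.1 hh
      rcases this with ⟨-, h2⟩ | ⟨h1, h2⟩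
      · exact h2
      · exact absurd h2 hwu
    · exact Or.inr ⟨(pair_mem_cK.1 hh).2.2, hwu⟩
    · exact absurd (pair_mem_cK.1 hh).2.1 hu2
  have h1 := hZ1.nbrs_ncard hE hC ⟨_, heC, Sym2.mem_mk_left u v⟩
  have h2 : (nbrs C u).ncard ≤ (insert v (V₁ \ {u})).ncard :=
    Set.ncard_le_ncard hnb (Set.toFinite _)
  have h3 : (insert v (V₁ \ {u})).ncard ≤ (V₁ \ {u}).ncard + 1 :=
    Set.ncard_insert_le _ _
  have h4 : (V₁ \ {u}).ncard = V₁.ncard - 1 := Set.ncard_diff_singleton_of_mem hu1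
  have h5 : 1 ≤ V₁.ncard := (Set.ncard_pos (Set.toFinite _)).2 ⟨u, hu1⟩
  omega

/-- The key counting/spanning argument: a crossing edge over an `(m-1)`-separator
is not in the closure of the union of the two complete flaps. -/
lemma ZZ.cross_not_closure (hZ1 : Zone m A) (hZ2 : Ztwo m A) (hm : 0 < m)
    (hV : m + 1 ≤ Fintype.card V) (hE : A.E = cK (univ : Set V))
    (hcover : V₁ ∪ V₂ = univ) (hinter : (V₁ ∩ V₂).ncard = m - 1)
    (hu1 : u ∈ V₁) (hu2 : u ∉ V₂) (hv2 : v ∈ V₂) (hv1 : v ∉ V₁)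
    (he : s(u, v) ∈ A.closure (cK V₁ ∪ cK V₂)) : False := by
  set G := cK V₁ ∪ cK V₂ with hGdef
  have hGsub : G ⊆ A.E :=
    Set.union_subset (cK_subset_ground hE V₁) (cK_subset_ground hE V₂)
  have hGcl : G ⊆ A.closure G := A.subset_closure G hGsub
  have hI1 : V₁ ∩ V₂ ⊆ V₁ := Set.inter_subset_left
  have hI2 : V₁ ∩ V₂ ⊆ V₂ := Set.inter_subset_right
  -- rule out small sides
  rcases le_or_gt V₁.ncard m with hn1 | hn1
  · exact hZ1.small_side hm hE hn1 hu1 hu2 hv1 he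
  rcases le_or_gt V₂.ncard m with hn2 | hn2
  · refine hZ1.small_side hm hE (V₁ := V₂) (V₂ := V₁) hn2 hv2 hv1 hu2 ?_
    rwa [hGdef, Set.union_comm, Sym2.eq_swap] at he
  -- Step A : all edges from u to the far side of V₂ are spanned
  have hspanA : ∀ y', y' ∈ V₂ → y' ∉ V₁ → s(u, y') ∈ A.closure G := by
    intro y' hy2 hy1
    by_cases hyv : y' = v
    · rwa [hyv]
    set U : Set V := insert u (insert v (insert y' (V₁ ∩ V₂))) with hUdef
    have hyI : y' ∉ V₁ ∩ V₂ := fun hh => hy1 (hI1 hh)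
    have hvI : v ∉ insert y' (V₁ ∩ V₂) := by
      rintro (rfl | hh)
      · exact hyv rfl
      · exact hv1 (hI1 hh)
    have huI : u ∉ insert v (insert y' (V₁ ∩ V₂)) := by
      rintro (rfl | rfl | hh)
      · exact hv1 hu1
      · exact hy1 hu1
      · exact hu2 (hI2 hh)
    have hUcard : U.ncard = m + 2 := by
      rw [hUdef, Set.ncard_insert_of_notMem huI (Set.toFinite _),
        Set.ncard_insert_of_notMem hvI (Set.toFinite _),
        Set.ncard_insert_of_notMem hyI (Set.toFinite _), hinter]
      omega
    have hCirc := hZ2 U hUcard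
    have huy : u ≠ y' := fun hh => hy1 (hh ▸ hu1)
    have hgU : s(u, y') ∈ cK U := pair_mem_cK.2
      ⟨huy, Set.mem_insert _ _, Or.inr (Or.inr (Set.mem_insert _ _))⟩
    have hsub2 : cK U \ {s(u, y')} ⊆ A.closure G := by
      rintro h ⟨hhU, hhg⟩
      by_cases huh : u ∈ h
      · obtain ⟨z, hzU, hzu, rfl⟩ := eq_pair_of_mem_cK hhU huh
        rcases hzU with rfl | rfl | rfl | hzI
        · exact absurd rfl hzu
        · exact he
        · exact absurd rfl hhg
        · exact hGcl (Or.inl (pair_mem_cK.2 ⟨fun hh => hzu hh.symm, hu1, hI1 hzI⟩))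
      · have h2 : h ∈ cK (insert v (insert y' (V₁ ∩ V₂))) :=
          mem_cK_of_not_mem (hUdef ▸ hhU) huh
        have h3 : h ∈ cK V₂ := cK_mono (by
          rw [Set.insert_subset_iff, Set.insert_subset_iff]
          exact ⟨hv2, hy2, hI2⟩) h2
        exact hGcl (Or.inr h3)
    have hstep := A.closure_subset_closure hsub2
    rw [A.closure_closure] at hstep
    exact hstep (hCirc.mem_closure_diff_singleton hgU)
  -- Step B : the closure of G is everything
  have hclaimB : ∀ p q, p ∈ V₁ → p ∉ V₂ → q ∈ V₂ → q ∉ V₁ → s(p, q) ∈ A.closure G := by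
    intro p q hp1 hp2 hq2 hq1
    by_cases hpu : p = u
    · rw [hpu]; exact hspanA q hq2 hq1
    set U : Set V := insert p (insert u (insert q (V₁ ∩ V₂))) with hUdef
    have hqI : q ∉ V₁ ∩ V₂ := fun hh => hq1 (hI1 hh)
    have huI : u ∉ insert q (V₁ ∩ V₂) := by
      rintro (rfl | hh)
      · exact hu2 hq2
      · exact hu2 (hI2 hh)
    have hpI : p ∉ insert u (insert q (V₁ ∩ V₂)) := by
      rintro (rfl | rfl | hh)
      · exact hpu rfl
      · exact hp2 hq2
      · exact hp2 (hI2 hh)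
    have hUcard : U.ncard = m + 2 := by
      rw [hUdef, Set.ncard_insert_of_notMem hpI (Set.toFinite _),
        Set.ncard_insert_of_notMem huI (Set.toFinite _),
        Set.ncard_insert_of_notMem hqI (Set.toFinite _), hinter]
      omega
    have hCirc := hZ2 U hUcard
    have hpq : p ≠ q := fun hh => hq1 (hh ▸ hp1)
    have hgU : s(p, q) ∈ cK U := pair_mem_cK.2
      ⟨hpq, Set.mem_insert _ _, Or.inr (Or.inr (Set.mem_insert _ _))⟩
    have hsub2 : cK U \ {s(p, q)} ⊆ A.closure G := by
      rintro h ⟨hhU, hhg⟩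
      by_cases hph : p ∈ h
      · obtain ⟨z, hzU, hzp, rfl⟩ := eq_pair_of_mem_cK hhU hph
        rcases hzU with rfl | rfl | rfl | hzI
        · exact absurd rfl hzp
        · exact hGcl (Or.inl (pair_mem_cK.2 ⟨fun hh => hzp hh.symm, hp1, hu1⟩))
        · exact absurd rfl hhg
        · exact hGcl (Or.inl (pair_mem_cK.2 ⟨fun hh => hzp hh.symm, hp1, hI1 hzI⟩))
      · have h2 : h ∈ cK (insert u (insert q (V₁ ∩ V₂))) :=
          mem_cK_of_not_mem (hUdef ▸ hhU) hph
        by_cases huh : u ∈ h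
        · obtain ⟨z, hzU, hzu, rfl⟩ := eq_pair_of_mem_cK h2 huh
          rcases hzU with rfl | rfl | hzI
          · exact absurd rfl hzu
          · exact hspanA z hq2 hq1
          · exact hGcl (Or.inl (pair_mem_cK.2 ⟨fun hh => hzu hh.symm, hu1, hI1 hzI⟩))
        · have h3 : h ∈ cK (insert q (V₁ ∩ V₂)) := mem_cK_of_not_mem h2 huh
          have h4 : h ∈ cK V₂ := cK_mono (by
            rw [Set.insert_subset_iff]
            exact ⟨hq2, hI2⟩) h3
          exact hGcl (Or.inr h4)
    have hstep := A.closure_subset_closure hsub2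
    rw [A.closure_closure] at hstep
    exact hstep (hCirc.mem_closure_diff_singleton hgU)
  have hGfull : A.closure G = cK (univ : Set V) := by
    refine subset_antisymm (hE ▸ A.closure_subset_ground G) ?_
    intro f hf
    obtain ⟨p, q, hpq, rfl⟩ := exists_pair_of_not_isDiag (mem_cK.1 hf).1
    have hp : p ∈ V₁ ∪ V₂ := by rw [hcover]; trivial
    have hq : q ∈ V₁ ∪ V₂ := by rw [hcover]; trivial
    by_cases hp1 : p ∈ V₁ <;> by_cases hp2 : p ∈ V₂ <;>
      by_cases hq1 : q ∈ V₁ <;> by_cases hq2 : q ∈ V₂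
    all_goals first
      | exact hGcl (Or.inl (pair_mem_cK.2 ⟨hpq, by assumption, by assumption⟩))
      | exact hGcl (Or.inr (pair_mem_cK.2 ⟨hpq, by assumption, by assumption⟩))
      | exact hclaimB p q (by assumption) (by assumption) (by assumption) (by assumption)
      | (rw [Sym2.eq_swap]
         exact hclaimB q p (by assumption) (by assumption) (by assumption) (by assumption))
      | (exfalso; rcases hp with hh | hh; exact hp1 hh; exact hp2 hh)
      | (exfalso; rcases hq with hh | hh; exact hq1 hh; exact hq2 hh)
  -- Step C : counting contradiction
  have hIind : A.Indep (cK (V₁ ∩ V₂)) := hZ1.indep_cK_small hE (by omega)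
  have hIsubG : cK (V₁ ∩ V₂) ⊆ G := fun _ hh => Or.inl (cK_mono hI1 hh)
  obtain ⟨B, hB, hIB⟩ := hIind.subset_isBasis_of_subset hIsubG hGsub
  have hBsubG : B ⊆ G := hB.subset
  have hBind := hB.indep
  set B₁ := B ∩ cK V₁ with hB₁def
  set B₂ := B \ cK V₁ with hB₂def
  have hBsplit : B₁.ncard + B₂.ncard = B.ncard :=
    Set.ncard_inter_add_ncard_diff_eq_ncard B (cK V₁) (Set.toFinite _)
  have hUB1 : 2 * B₁.ncard + m * (m + 1) ≤ 2 * (m * V₁.ncard) :=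
    hZ1.indep_ncard_upper hZ2 hE (by omega) (hBind.subset Set.inter_subset_left)
      Set.inter_subset_right
  have hB₂V₂ : B₂ ⊆ cK V₂ := by
    rintro b ⟨hbB, hbV₁⟩
    rcases hBsubG hbB with hh | hh
    · exact absurd hh hbV₁
    · exact hh
  have hdisj : Disjoint B₂ (cK (V₁ ∩ V₂)) := by
    rw [Set.disjoint_right]
    intro b hb hbB₂
    exact hbB₂.2 (cK_mono hI1 hb)
  have hJ₂sub : B₂ ∪ cK (V₁ ∩ V₂) ⊆ cK V₂ :=
    Set.union_subset hB₂V₂ (cK_mono hI2)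
  have hJ₂ind : A.Indep (B₂ ∪ cK (V₁ ∩ V₂)) :=
    hBind.subset (Set.union_subset Set.diff_subset hIB)
  have hJ₂card : (B₂ ∪ cK (V₁ ∩ V₂)).ncard = B₂.ncard + (cK (V₁ ∩ V₂)).ncard :=
    Set.ncard_union_eq hdisj.symm.symm (Set.toFinite _) (Set.toFinite _)
  have hUB2 : 2 * (B₂ ∪ cK (V₁ ∩ V₂)).ncard + m * (m + 1) ≤ 2 * (m * V₂.ncard) :=
    hZ1.indep_ncard_upper hZ2 hE (by omega) hJ₂ind hJ₂sub
  have hIcard : (cK (V₁ ∩ V₂)).ncard = (m - 1).choose 2 := by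
    rw [cK_ncard (Set.toFinite _), hinter]
  obtain ⟨J₀, hJ₀sub, hJ₀ind, hJ₀card⟩ := hZ1.exists_big_indep hE (Fintype.card V) hV
    (univ : Set V) (by rw [Set.ncard_univ, Nat.card_eq_fintype_card])
  have hJ₀cl : J₀ ⊆ A.closure B := by
    rw [hB.closure_eq_closure, hGfull]
    exact hJ₀sub
  have hLB : J₀.ncard ≤ B.ncard :=
    hJ₀ind.ncard_le_of_subset_closure hBind (Set.toFinite _) hJ₀cl
  have hcV : V₁.ncard + V₂.ncard = Fintype.card V + (m - 1) := by
    have := Set.ncard_union_add_ncard_inter V₁ V₂ (Set.toFinite _) (Set.toFinite _)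
    rw [hcover, hinter, Set.ncard_univ, Nat.card_eq_fintype_card] at this
    omega
  -- assemble
  have hmul : m * V₁.ncard + m * V₂.ncard = m * Fintype.card V + m * (m - 1) := by
    rw [← Nat.mul_add, hcV, Nat.mul_add]
  have h2D := two_mul_choose_two (m - 1)
  have hfinal : (m - 1) * (m - 2) + m * (m + 1) ≤ 2 * (m * (m - 1)) := by
    have e1 : m - 1 - 1 = m - 2 := by omega
    rw [e1] at h2D
    linarith [hUB1, hUB2, hJ₀card, hLB, hBsplit, hJ₂card, hIcard, hmul, h2D]
  exact final_arith hm hfinal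

end PartE
section PartF
open Set

variable {V : Type*} [Fintype V] [DecidableEq V] {m : ℕ} {A : Matroid (Sym2 V)}
  {V₁ V₂ S T : Set V} {E F C B J G : Set (Sym2 V)} {e f g h : Sym2 V} {a t u v w x y : V}

lemma chirality {S T : Set V} (hx : x ∈ S ∪ T) (hy : y ∈ S ∪ T)
    (h1 : ¬(x ∈ S ∧ y ∈ S)) (h2 : ¬(x ∈ T ∧ y ∈ T)) :
    (x ∈ S ∧ x ∉ T ∧ y ∈ T ∧ y ∉ S) ∨ (y ∈ S ∧ y ∉ T ∧ x ∈ T ∧ x ∉ S) := by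
  rcases hx with hx | hx <;> rcases hy with hy | hy <;> tauto

/-- Backward direction, axiom C1. -/
lemma ZZ.C1 (hZ1 : Zone m A) (hZ2 : Ztwo m A) (hm : 0 < m)
    (hV : m + 1 ≤ Fintype.card V) (hE : A.E = cK (univ : Set V))
    (hEsub : E ⊆ cK (univ : Set V)) (hFsub : F ⊆ cK (univ : Set V))
    (hcard : (supp E ∩ supp F).ncard < m) :
    A.closure (E ∪ F) ⊆ cK (supp E) ∪ cK (supp F) := by
  set S := supp E with hSdef
  set T := supp F with hTdef
  have hsub : E ∪ F ⊆ cK S ∪ cK T :=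
    Set.union_subset (fun e he => Or.inl (subset_cK_supp hEsub he))
      (fun e he => Or.inr (subset_cK_supp hFsub he))
  -- the cross case killer
  have hcross : ∀ x y, x ∈ S → x ∉ T → y ∈ T → y ∉ S →
      s(x, y) ∈ A.closure (cK S ∪ cK T) → False := by
    intro x y hx1 hx2 hy2 hy1 hxyc
    have hxy : x ≠ y := fun hh => hy1 (hh ▸ hx1)
    set k := (S ∩ T).ncard with hkdef
    have hkm : k ≤ m - 1 := by omega
    set Q : Set V := (S ∩ T) ∪ {x, y} with hQdef
    have hQcard : Q.ncard ≤ k + 2 := by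
      refine (Set.ncard_union_le _ _).trans ?_
      have : ({x, y} : Set V).ncard ≤ 2 := by
        refine (Set.ncard_insert_le _ _).trans ?_
        simp
      omega
    have hQuniv : Q ⊆ univ := Set.subset_univ Q
    have hdiffcard : m - 1 - k ≤ (univ \ Q).ncard := by
      rw [Set.ncard_diff hQuniv (Set.toFinite _), Set.ncard_univ, Nat.card_eq_fintype_card]
      omega
    obtain ⟨P, hPsub, hPcard⟩ := Set.exists_subset_card_eq hdiffcard
    set M : Set V := (S ∩ T) ∪ P with hMdef
    have hPdisj : Disjoint (S ∩ T) P := by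
      rw [Set.disjoint_right]
      intro p hp hpST
      exact (hPsub hp).2 (Or.inl hpST)
    have hMcard : M.ncard = m - 1 := by
      rw [hMdef, Set.ncard_union_eq hPdisj (Set.toFinite _) (Set.toFinite _), hPcard]
      omega
    have hxM : x ∉ M := by
      rintro (hh | hh)
      · exact hx2 hh.2
      · exact (hPsub hh).2 (Or.inr (Or.inl rfl))
    have hyM : y ∉ M := by
      rintro (hh | hh)
      · exact hy1 hh.1
      · exact (hPsub hh).2 (Or.inr (Or.inr rfl))
    set W₂ : Set V := T ∪ M with hW₂def
    set W₁ : Set V := (univ \ W₂) ∪ M with hW₁def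
    have hMW₂ : M ⊆ W₂ := Set.subset_union_right
    have hcover : W₁ ∪ W₂ = univ := by
      rw [hW₁def, Set.union_assoc, Set.union_eq_self_of_subset_left hMW₂,
        Set.diff_union_of_subset (Set.subset_univ _)]
    have hinter : W₁ ∩ W₂ = M := by
      ext z
      constructor
      · rintro ⟨hz1 | hz1, hz2⟩
        · exact absurd hz2 hz1.2
        · exact hz1
      · intro hz
        exact ⟨Or.inr hz, hMW₂ hz⟩
    have hintercard : (W₁ ∩ W₂).ncard = m - 1 := by rw [hinter]; exact hMcard
    have hSW₁ : S ⊆ W₁ := by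
      intro s hs
      by_cases hsW₂ : s ∈ W₂
      · rcases hsW₂ with hh | hh
        · exact Or.inr (Or.inl ⟨hs, hh⟩)
        · exact Or.inr hh
      · exact Or.inl ⟨trivial, hsW₂⟩
    have hTW₂ : T ⊆ W₂ := Set.subset_union_left
    have hxW₁ : x ∈ W₁ := hSW₁ hx1
    have hxW₂ : x ∉ W₂ := by
      rintro (hh | hh)
      · exact hx2 hh
      · exact hxM hh
    have hyW₂ : y ∈ W₂ := hTW₂ hy2
    have hyW₁ : y ∉ W₁ := by
      rintro (hh | hh)
      · exact hh.2 hyW₂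
      · exact hyM hh
    have hmono : A.closure (cK S ∪ cK T) ⊆ A.closure (cK W₁ ∪ cK W₂) :=
      A.closure_subset_closure (Set.union_subset_union (cK_mono hSW₁) (cK_mono hTW₂))
    exact ZZ.cross_not_closure hZ1 hZ2 hm hV hE hcover hintercard hxW₁ hxW₂ hyW₂ hyW₁
      (hmono hxyc)
  -- main proof
  intro e he
  have he' : e ∈ A.closure (cK S ∪ cK T) := A.closure_subset_closure hsub he
  have heST : e ∈ cK (S ∪ T) := by
    have h1 : cK S ∪ cK T ⊆ cK (S ∪ T) :=
      Set.union_subset (cK_mono Set.subset_union_left) (cK_mono Set.subset_union_right)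
    have h2 := A.closure_subset_closure h1
    rw [hZ1.closure_cK hm hE (S ∪ T)] at h2
    exact h2 he'
  by_contra heG
  obtain ⟨p, q, hpq, rfl⟩ := exists_pair_of_not_isDiag heST.1
  have hp : p ∈ S ∪ T := heST.2 p (Sym2.mem_mk_left p q)
  have hq : q ∈ S ∪ T := heST.2 q (Sym2.mem_mk_right p q)
  have h1 : ¬(p ∈ S ∧ q ∈ S) := fun hh => heG (Or.inl (pair_mem_cK.2 ⟨hpq, hh.1, hh.2⟩))
  have h2 : ¬(p ∈ T ∧ q ∈ T) := fun hh => heG (Or.inr (pair_mem_cK.2 ⟨hpq, hh.1, hh.2⟩))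
  rcases chirality hp hq h1 h2 with ⟨ha, hb, hc, hd⟩ | ⟨ha, hb, hc, hd⟩
  · exact hcross p q ha hb hc hd he'
  · rw [Sym2.eq_swap] at he'
    exact hcross q p ha hb hc hd he'

/-- Backward direction, axiom C2. -/
lemma ZZ.C2 (hZ1 : Zone m A) (hZ2 : Ztwo m A) (hm : 0 < m)
    (hE : A.E = cK (univ : Set V))
    (hEsub : E ⊆ cK (univ : Set V)) (hFsub : F ⊆ cK (univ : Set V))
    (hER : Rigid A E) (hFR : Rigid A F)
    (hcard : m ≤ (supp E ∩ supp F).ncard) : Rigid A (E ∪ F) := by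
  set S := supp E with hSdef
  set T := supp F with hTdef
  have hsub : E ∪ F ⊆ cK (S ∪ T) :=
    Set.union_subset
      ((subset_cK_supp hEsub).trans (cK_mono Set.subset_union_left))
      ((subset_cK_supp hFsub).trans (cK_mono Set.subset_union_right))
  have hScl : cK S ⊆ A.closure (E ∪ F) := by
    rw [← hER]
    exact A.closure_subset_closure Set.subset_union_left
  have hTcl : cK T ⊆ A.closure (E ∪ F) := by
    rw [← hFR]
    exact A.closure_subset_closure Set.subset_union_right
  rw [Rigid, supp_union, ← hSdef, ← hTdef]
  refine subset_antisymm ?_ ?_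
  · have h2 := A.closure_subset_closure hsub
    rwa [hZ1.closure_cK hm hE (S ∪ T)] at h2
  · -- every edge of cK (S ∪ T) is in the closure
    have hcross : ∀ p q, p ∈ S → p ∉ T → q ∈ T → q ∉ S →
        s(p, q) ∈ A.closure (E ∪ F) := by
      intro p q hp1 hp2 hq2 hq1
      have hpq : p ≠ q := fun hh => hq1 (hh ▸ hp1)
      obtain ⟨W, hWsub, hWcard⟩ := Set.exists_subset_card_eq hcard
      have hpW : p ∉ insert q W := by
        rintro (rfl | hh)
        · exact hpq rfl
        · exact hp2 (hWsub hh).2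
      have hqW : q ∉ W := fun hh => hq1 (hWsub hh).1
      set U : Set V := insert p (insert q W) with hUdef
      have hUcard : U.ncard = m + 2 := by
        rw [hUdef, Set.ncard_insert_of_notMem hpW (Set.toFinite _),
          Set.ncard_insert_of_notMem hqW (Set.toFinite _), hWcard]
      have hCirc := hZ2 U hUcard
      have hfU : s(p, q) ∈ cK U := pair_mem_cK.2
        ⟨hpq, Set.mem_insert _ _, Or.inr (Set.mem_insert _ _)⟩
      have hsub2 : cK U \ {s(p, q)} ⊆ A.closure (E ∪ F) := by
        rintro h ⟨hhU, hhf⟩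
        by_cases hph : p ∈ h
        · obtain ⟨z, hzU, hzp, rfl⟩ := eq_pair_of_mem_cK hhU hph
          rcases hzU with rfl | rfl | hzW
          · exact absurd rfl hzp
          · exact absurd rfl hhf
          · exact hScl (pair_mem_cK.2 ⟨fun hh => hzp hh.symm, hp1, (hWsub hzW).1⟩)
        · have h2 : h ∈ cK (insert q W) := mem_cK_of_not_mem (hUdef ▸ hhU) hph
          refine hTcl (cK_mono ?_ h2)
          rw [Set.insert_subset_iff]
          exact ⟨hq2, fun z hz => (hWsub hz).2⟩
      have hstep := A.closure_subset_closure hsub2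
      rw [A.closure_closure] at hstep
      exact hstep (hCirc.mem_closure_diff_singleton hfU)
    intro f hf
    obtain ⟨p, q, hpq, rfl⟩ := exists_pair_of_not_isDiag hf.1
    have hp : p ∈ S ∪ T := hf.2 p (Sym2.mem_mk_left p q)
    have hq : q ∈ S ∪ T := hf.2 q (Sym2.mem_mk_right p q)
    by_cases h1 : p ∈ S ∧ q ∈ S
    · exact hScl (pair_mem_cK.2 ⟨hpq, h1.1, h1.2⟩)
    by_cases h2 : p ∈ T ∧ q ∈ T
    · exact hTcl (pair_mem_cK.2 ⟨hpq, h2.1, h2.2⟩)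
    rcases chirality hp hq h1 h2 with ⟨ha, hb, hc, hd⟩ | ⟨ha, hb, hc, hd⟩
    · exact hcross p q ha hb hc hd
    · rw [Sym2.eq_swap]
      exact hcross q p ha hb hc hd

end PartF
section PartG
open Set

variable {V : Type*} [Fintype V] [DecidableEq V] {m : ℕ} {A : Matroid (Sym2 V)}
  {S T U : Set V} {E F C B J G X : Set (Sym2 V)} {e f g h : Sym2 V} {a t u v w x y : V}

/-- From axiom C1: the closure of any edge set is inside the complete graph
on its support. -/
lemma ARM.closure_subset_cK_supp (hm : 0 < m)
    (hC1 : ∀ E F : Set (Sym2 V), E ⊆ cK (univ : Set V) → F ⊆ cK (univ : Set V) →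
      (supp E ∩ supp F).ncard < m →
      A.closure (E ∪ F) ⊆ cK (supp E) ∪ cK (supp F))
    (hX : X ⊆ cK (univ : Set V)) : A.closure X ⊆ cK (supp X) := by
  have h := hC1 X ∅ hX (Set.empty_subset _) (by
    rw [supp_empty, Set.inter_empty, Set.ncard_empty]
    exact hm)
  rwa [Set.union_empty, supp_empty, cK_empty, Set.union_empty] at h

/-- ARM implies Z1. -/
lemma ARM.zone (hm : 0 < m) (hE : A.E = cK (univ : Set V))
    (hC1 : ∀ E F : Set (Sym2 V), E ⊆ cK (univ : Set V) → F ⊆ cK (univ : Set V) →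
      (supp E ∩ supp F).ncard < m →
      A.closure (E ∪ F) ⊆ cK (supp E) ∪ cK (supp F)) :
    Zone m A := by
  intro C hC v hv
  by_contra hval
  push_neg at hval
  have hCsub : C ⊆ cK (univ : Set V) := hE ▸ hC.subset_ground
  obtain ⟨e₀, he₀C, hve₀⟩ := hv
  set St := {f ∈ C | v ∈ f} with hStdef
  set Fs := St \ {e₀} with hFsdef
  set Es := C \ St with hEsdef
  have he₀St : e₀ ∈ St := ⟨he₀C, hve₀⟩
  have hEF : Es ∪ Fs = C \ {e₀} := by
    ext f
    constructor
    · rintro (⟨hfC, hfSt⟩ | ⟨⟨hfC, hvf⟩, hfe₀⟩)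
      · exact ⟨hfC, fun hh => hfSt (hh ▸ he₀St)⟩
      · exact ⟨hfC, hfe₀⟩
    · rintro ⟨hfC, hfe₀⟩
      by_cases hvf : v ∈ f
      · exact Or.inr ⟨⟨hfC, hvf⟩, hfe₀⟩
      · exact Or.inl ⟨hfC, fun hh => hvf hh.2⟩
  have hvEs : v ∉ supp Es := by
    rintro ⟨f, ⟨hfC, hfSt⟩, hvf⟩
    exact hfSt ⟨hfC, hvf⟩
  have hFsub : Fs ⊆ cK (univ : Set V) := (Set.diff_subset.trans
    (Set.sep_subset _ _)).trans hCsub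
  have hEsub : Es ⊆ cK (univ : Set V) := Set.diff_subset.trans hCsub
  have hsuppFs : supp Es ∩ supp Fs ⊆ nbrs Fs v := by
    rintro w ⟨hwEs, hwFs⟩
    have hwv : w ≠ v := fun hh => hvEs (hh ▸ hwEs)
    obtain ⟨f, hfFs, hwf⟩ := hwFs
    have hvf : v ∈ f := hfFs.1.2
    have : f = s(v, w) := pair_eq_of_mem_of_mem (fun hh => hwv hh.symm) hvf hwf
    exact ⟨hwv, this ▸ hfFs⟩
  have hcard : (supp Es ∩ supp Fs).ncard < m := by
    have h1 : (nbrs Fs v).ncard = valence Fs v := (valence_eq_ncard_nbrs hFsub).symm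
    have h2 : valence Fs v ≤ Fs.ncard := Set.ncard_le_ncard (Set.sep_subset _ _)
      (Set.toFinite _)
    have h3 : Fs.ncard = St.ncard - 1 := Set.ncard_diff_singleton_of_mem he₀St
    have h4 : 1 ≤ St.ncard := (Set.ncard_pos (Set.toFinite _)).2 ⟨e₀, he₀St⟩
    have h5 := Set.ncard_le_ncard hsuppFs (Set.toFinite _)
    have h6 : St.ncard = valence C v := rfl
    omega
  have hclose := hC1 Es Fs hEsub hFsub hcard
  rw [hEF] at hclose
  have he₀cl : e₀ ∈ A.closure (C \ {e₀}) := hC.mem_closure_diff_singleton he₀C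
  rcases hclose he₀cl with hh | hh
  · exact hvEs (hh.2 v hve₀)
  · obtain ⟨w₀, hw₀Fs, hw₀v, rfl⟩ := eq_pair_of_mem_cK hh hve₀
    obtain ⟨f, hfFs, hw₀f⟩ := hw₀Fs
    have hvf : v ∈ f := hfFs.1.2
    have : f = s(v, w₀) := pair_eq_of_mem_of_mem (fun hc => hw₀v hc.symm) hvf hw₀f
    exact hfFs.2 this

/-- ARM implies Z2. -/
lemma ARM.ztwo (hm : 0 < m) (hE : A.E = cK (univ : Set V))
    (hC1 : ∀ E F : Set (Sym2 V), E ⊆ cK (univ : Set V) → F ⊆ cK (univ : Set V) →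
      (supp E ∩ supp F).ncard < m →
      A.closure (E ∪ F) ⊆ cK (supp E) ∪ cK (supp F))
    (hC2 : ∀ E F : Set (Sym2 V), E ⊆ cK (univ : Set V) → F ⊆ cK (univ : Set V) →
      Rigid A E → Rigid A F → m ≤ (supp E ∩ supp F).ncard → Rigid A (E ∪ F)) :
    Ztwo m A := by
  intro U hU
  have hZ1 := ARM.zone hm hE hC1
  obtain ⟨v₁, hv₁⟩ : U.Nonempty := Set.nonempty_of_ncard_ne_zero (by omega)
  obtain ⟨v₂, hv₂, hv₂ne⟩ := Set.exists_ne_of_one_lt_ncard (show 1 < U.ncard by omega) v₁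
  have hcard₁ : (U \ {v₁}).ncard = m + 1 := by
    rw [Set.ncard_diff_singleton_of_mem hv₁, hU]
    omega
  have hcard₂ : (U \ {v₂}).ncard = m + 1 := by
    rw [Set.ncard_diff_singleton_of_mem hv₂, hU]
    omega
  have hrig : ∀ z ∈ U, Rigid A (cK (U \ {z})) := by
    intro z hz
    have hcz : (U \ {z}).ncard = m + 1 := by
      rw [Set.ncard_diff_singleton_of_mem hz, hU]
      omega
    have hsupp : supp (cK (U \ {z})) = U \ {z} := supp_cK (by omega)
    rw [Rigid, hsupp]
    refine subset_antisymm ?_ (A.subset_closure _ (cK_subset_ground hE _))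
    have := ARM.closure_subset_cK_supp hm hC1 (cK_mono (Set.subset_univ _) :
      cK (U \ {z}) ⊆ cK (univ : Set V))
    rwa [hsupp] at this
  have hsupp₁ : supp (cK (U \ {v₁})) = U \ {v₁} := supp_cK (by omega)
  have hsupp₂ : supp (cK (U \ {v₂})) = U \ {v₂} := supp_cK (by omega)
  have hinter : (U \ {v₁}) ∩ (U \ {v₂}) = U \ {v₁, v₂} := by
    ext z
    simp only [Set.mem_inter_iff, Set.mem_diff, Set.mem_singleton_iff, Set.mem_insert_iff]
    tauto
  have hintercard : (supp (cK (U \ {v₁})) ∩ supp (cK (U \ {v₂}))).ncard = m := by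
    rw [hsupp₁, hsupp₂, hinter]
    have hv₂' : v₂ ∈ U \ {v₁} := ⟨hv₂, hv₂ne⟩
    have : U \ {v₁, v₂} = (U \ {v₁}) \ {v₂} := by
      ext z
      simp only [Set.mem_diff, Set.mem_singleton_iff, Set.mem_insert_iff]
      tauto
    rw [this, Set.ncard_diff_singleton_of_mem hv₂', hcard₁]
    omega
  have hRig12 := hC2 _ _ (cK_mono (Set.subset_univ _)) (cK_mono (Set.subset_univ _))
    (hrig v₁ hv₁) (hrig v₂ hv₂) (le_of_eq hintercard.symm)
  have hsuppU : supp (cK (U \ {v₁}) ∪ cK (U \ {v₂})) = U := by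
    rw [supp_union, hsupp₁, hsupp₂]
    ext z
    constructor
    · rintro (hz | hz)
      · exact hz.1
      · exact hz.1
    · intro hz
      by_cases hzv : z = v₁
      · refine Or.inr ⟨hz, fun hh => hv₂ne ?_⟩
        rw [Set.mem_singleton_iff] at hh
        rw [hh] at hzv
        exact hzv
      · exact Or.inl ⟨hz, hzv⟩
  have hestar : s(v₁, v₂) ∈ cK U := pair_mem_cK.2 ⟨fun hh => hv₂ne hh.symm, hv₁, hv₂⟩
  have hunion : cK (U \ {v₁}) ∪ cK (U \ {v₂}) = cK U \ {s(v₁, v₂)} := by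
    ext h
    constructor
    · rintro (hh | hh)
      · refine ⟨cK_mono Set.diff_subset hh, fun heq => ?_⟩
        have : v₁ ∈ h := heq ▸ Sym2.mem_mk_left v₁ v₂
        exact (hh.2 v₁ this).2 rfl
      · refine ⟨cK_mono Set.diff_subset hh, fun heq => ?_⟩
        have : v₂ ∈ h := heq ▸ Sym2.mem_mk_right v₁ v₂
        exact (hh.2 v₂ this).2 rfl
    · rintro ⟨hh, hhe⟩
      by_cases hv₁h : v₁ ∈ h
      · by_cases hv₂h : v₂ ∈ h
        · exact absurd (pair_eq_of_mem_of_mem (fun hc => hv₂ne hc.symm) hv₁h hv₂h) hhe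
        · exact Or.inr ⟨hh.1, fun z hz => ⟨hh.2 z hz, fun hc => hv₂h (hc ▸ hz)⟩⟩
      · exact Or.inl ⟨hh.1, fun z hz => ⟨hh.2 z hz, fun hc => hv₁h (hc ▸ hz)⟩⟩
  have hcl : A.closure (cK U \ {s(v₁, v₂)}) = cK U := by
    have := hRig12
    rw [Rigid, hsuppU, hunion] at this
    exact this
  have hdep : A.Dep (cK U) := by
    rw [Matroid.dep_iff]
    refine ⟨fun hind => ?_, cK_subset_ground hE U⟩
    exact hind.notMem_closure_diff_of_mem hestar (by rw [hcl]; exact hestar)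
  refine ⟨hdep, fun D hD => ?_⟩
  by_contra hind
  have hDsub : D ⊆ cK U := hD.subset
  have hDdep : A.Dep D := Matroid.dep_iff.2 ⟨hind, hDsub.trans (cK_subset_ground hE U)⟩
  obtain ⟨C₀, hC₀D, hC₀⟩ := hDdep.exists_isCircuit'_subset (Set.toFinite _)
  have hC₀U : C₀ ⊆ cK U := hC₀D.trans hDsub
  have hsuppC₀ : supp C₀ ⊆ U := supp_subset_of_subset_cK hC₀U
  have hnbrs : ∀ z ∈ supp C₀, nbrs C₀ z = U \ {z} := by
    intro z hz
    refine Set.eq_of_subset_of_ncard_le ?_ ?_ (Set.toFinite _)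
    · intro w hw
      exact ⟨hsuppC₀ (nbrs_subset_supp hw), hw.1⟩
    · have h1 := hZ1.nbrs_ncard hE hC₀ hz
      have h2 : (U \ {z}).ncard = m + 1 := by
        rw [Set.ncard_diff_singleton_of_mem (hsuppC₀ hz), hU]
        omega
      omega
  obtain ⟨e₀, he₀⟩ := hC₀.nonempty
  have hu₀ : e₀.out.1 ∈ supp C₀ := ⟨e₀, he₀, Sym2.out_fst_mem e₀⟩
  have hsuppeq : supp C₀ = U := by
    refine hsuppC₀.antisymm fun z hz => ?_
    by_cases hzu : z = e₀.out.1
    · exact hzu ▸ hu₀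
    · have : z ∈ nbrs C₀ e₀.out.1 := by
        rw [hnbrs _ hu₀]
        exact ⟨hz, hzu⟩
      exact nbrs_subset_supp this
  have hCU : cK U ⊆ C₀ := by
    intro h hh
    obtain ⟨p, q, hpq, rfl⟩ := exists_pair_of_not_isDiag hh.1
    have hp : p ∈ supp C₀ := hsuppeq ▸ hh.2 p (Sym2.mem_mk_left p q)
    have hq : q ∈ nbrs C₀ p := by
      rw [hnbrs p hp]
      exact ⟨hh.2 q (Sym2.mem_mk_right p q), fun hc => hpq hc.symm⟩
    exact hq.2
  exact hD.not_subset (hCU.trans hC₀D)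

end PartG

theorem stmt_14 {V : Type*} [Fintype V] [DecidableEq V] (m : ℕ) (hm : 0 < m)
    (hV : m + 1 ≤ Fintype.card V)
    (A : Matroid (Sym2 V)) (hE : A.E = cK (univ : Set V)) :
    IsARMOn m (univ : Set V) A ↔
      ((∀ C, A.IsCircuit' C → ∀ v ∈ supp C, m + 1 ≤ valence C v) ∧
       (∀ U : Set V, U.ncard = m + 2 → A.IsCircuit' (cK U))) := by
  constructor
  · rintro ⟨hE', hC1, hC2⟩
    exact ⟨ARM.zone hm hE hC1, ARM.ztwo hm hE hC1 hC2⟩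
  · rintro ⟨hZ1, hZ2⟩
    refine ⟨hE, fun E F hEs hFs hc => ZZ.C1 hZ1 hZ2 hm hV hE hEs hFs hc,
      fun E F hEs hFs hER hFR hc => ZZ.C2 hZ1 hZ2 hm hE hEs hFs hER hFR hc⟩
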